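/- The class of compact ρ,h-cone-convex sets is closed under Hausdorff convergence: if S_n are compact ρ,h-cone-convex sets in ℝ^d and S is a nonempty compact set with d_H(S_n,S) → 0, then S is ρ,h-cone-convex. -/

import Mathlib

open MeasureTheory Metric Set Filter

noncomputable section

/-- The open finite cone with vertex `x`, axis `ξ`, opening angle `ρ` and height `h`. -/
def fcone (d : ℕ) (ρ h : ℝ) (x ξ : EuclideanSpace ℝ (Fin d)) :
    Set (EuclideanSpace ℝ (Fin d)) :=
  {z | z ≠ x ∧ (inner ℝ ξ (‖z - x‖⁻¹ • (z - x)) : ℝ) > Real.cos (ρ / 2)} ∩ Metric.ball x h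

/-- `S` is `ρ,h`-cone-convex. -/
def ConeConvex (d : ℕ) (ρ h : ℝ) (S : Set (EuclideanSpace ℝ (Fin d))) : Prop :=
  ∀ x ∈ frontier S, ∃ ξ : EuclideanSpace ℝ (Fin d), ‖ξ‖ = 1 ∧ fcone d ρ h x ξ ⊆ Sᶜ

/-- The `ρ,h`-cone-convex hull by complement. -/
def cccHull (d : ℕ) (ρ h : ℝ) (S : Set (EuclideanSpace ℝ (Fin d))) :
    Set (EuclideanSpace ℝ (Fin d)) :=
  ⋂₀ {A | ∃ y ξ : EuclideanSpace ℝ (Fin d),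
      ‖ξ‖ = 1 ∧ fcone d ρ h y ξ ∩ S = ∅ ∧ A = (fcone d ρ h y ξ)ᶜ}

/-- The `ρ,h`-cone-convex hull: intersection of all compact `ρ,h`-cone-convex supersets. -/
def ccHull (d : ℕ) (ρ h : ℝ) (S : Set (EuclideanSpace ℝ (Fin d))) :
    Set (EuclideanSpace ℝ (Fin d)) :=
  ⋂₀ {B | S ⊆ B ∧ IsCompact B ∧ B.Nonempty ∧ ConeConvex d ρ h B}

lemma crossing_frontier {E : Type*} [TopologicalSpace E] {t s : Set E} (ht : IsPreconnected t)
    {p q : E} (hp : p ∈ t) (hq : q ∈ t) (hps : p ∈ s) (hqs : q ∉ closure s) :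
    (t ∩ frontier s).Nonempty := by
  by_contra hcon
  rw [Set.not_nonempty_iff_eq_empty] at hcon
  have hsub : t ⊆ interior s ∪ (closure s)ᶜ := by
    intro w hw
    by_contra hwc
    simp only [Set.mem_union, Set.mem_compl_iff, not_or, not_not] at hwc
    have : w ∈ t ∩ frontier s := ⟨hw, hwc.2, hwc.1⟩
    rw [hcon] at this
    exact this
  rcases ht.subset_or_subset isOpen_interior isClosed_closure.isOpen_compl
      (disjoint_compl_right.mono_left interior_subset_closure) hsub with h1 | h2
  · exact hqs (interior_subset_closure (h1 hq))
  · exact (h2 hp) (subset_closure hps)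

theorem stmt_9 {d : ℕ} {ρ h : ℝ} (hρ : ρ ∈ Set.Ioc 0 Real.pi) (hh : 0 < h)
    (Sn : ℕ → Set (EuclideanSpace ℝ (Fin d)))
    (hSn : ∀ n, IsCompact (Sn n)) (hSne : ∀ n, (Sn n).Nonempty)
    (hcc : ∀ n, ConeConvex d ρ h (Sn n))
    (S : Set (EuclideanSpace ℝ (Fin d))) (hS : IsCompact S) (hne : S.Nonempty)
    (hconv : Tendsto (fun n => Metric.hausdorffDist (Sn n) S) atTop (nhds 0)) :
    ConeConvex d ρ h S := by
  intro x hx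
  have hxS : x ∈ S := hS.isClosed.closure_eq ▸ hx.1
  have hfin : ∀ n, EMetric.hausdorffEdist (Sn n) S ≠ ⊤ := fun n =>
    Metric.hausdorffEdist_ne_top_of_nonempty_of_bounded (hSne n) hne (hSn n).isBounded
      hS.isBounded
  -- Step 1: find indices and frontier points converging to x
  have key : ∀ k : ℕ, ∃ n : ℕ, ∃ y ∈ frontier (Sn n),
      dist y x < 1 / (k + 1) ∧ Metric.hausdorffDist (Sn n) S < 1 / (k + 1) := by
    intro k
    set δ : ℝ := 1 / (k + 1) with hδdef
    have hδ : 0 < δ := by positivity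
    have hxcl : x ∈ closure Sᶜ := by
      have hx' := hx; rw [frontier_eq_closure_inter_closure] at hx'; exact hx'.2
    obtain ⟨q, hqc, hqd⟩ := Metric.mem_closure_iff.1 hxcl δ hδ
    have hqS : q ∉ S := hqc
    have hr : 0 < Metric.infDist q S :=
      (hS.isClosed.notMem_iff_infDist_pos hne).1 hqS
    have hev : ∀ᶠ n in atTop,
        Metric.hausdorffDist (Sn n) S < min δ (Metric.infDist q S) :=
      hconv.eventually (eventually_lt_nhds (lt_min hδ hr))
    obtain ⟨n, hn⟩ := hev.exists
    have hnδ : Metric.hausdorffDist (Sn n) S < δ := hn.trans_le (min_le_left _ _)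
    -- a point of Sn n close to x
    obtain ⟨p, hpmem, hpd⟩ :=
      Metric.exists_dist_lt_of_hausdorffDist_lt' hxS hnδ (hfin n)
    -- q is not in Sn n
    have hqSn : q ∉ Sn n := by
      intro hq
      have := Metric.infDist_le_hausdorffDist_of_mem hq (hfin n)
      have h2 := hn.trans_le (min_le_right _ _)
      linarith
    -- the segment from p to q crosses the frontier of Sn n
    have hseg : IsPreconnected (segment ℝ p q) := (convex_segment p q).isPreconnected
    obtain ⟨y, hyseg, hyfr⟩ := crossing_frontier hseg (left_mem_segment ℝ p q)
      (right_mem_segment ℝ p q) hpmem (by rwa [(hSn n).isClosed.closure_eq])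
    have hpb : p ∈ Metric.ball x δ := by rwa [Metric.mem_ball]
    have hqb : q ∈ Metric.ball x δ := by rwa [Metric.mem_ball, dist_comm]
    have hyb : y ∈ Metric.ball x δ := (convex_ball x δ).segment_subset hpb hqb hyseg
    exact ⟨n, y, hyfr, Metric.mem_ball.1 hyb, hnδ⟩
  choose n y hyfr hydist hHd using key
  choose ξ hξnorm hξsub using fun k => hcc (n k) (y k) (hyfr k)
  have hξsph : ∀ k, ξ k ∈ Metric.sphere (0 : EuclideanSpace ℝ (Fin d)) 1 := fun k => by
    rw [mem_sphere_zero_iff_norm]; exact hξnorm k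
  obtain ⟨ξ₀, hξ₀mem, φ, hφmono, hξtend⟩ :=
    (isCompact_sphere (0 : EuclideanSpace ℝ (Fin d)) 1).tendsto_subseq hξsph
  refine ⟨ξ₀, mem_sphere_zero_iff_norm.1 hξ₀mem, ?_⟩
  intro z hz
  rw [Set.mem_compl_iff]
  intro hzS
  obtain ⟨⟨hzx, hzcos⟩, hzball⟩ := hz
  -- auxiliary limit: 1/(φ j + 1) → 0
  have hlim : Tendsto (fun j : ℕ => 1 / ((φ j : ℝ) + 1)) atTop (nhds 0) := by
    refine squeeze_zero (fun j => by positivity) (fun j => ?_)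
      tendsto_one_div_add_atTop_nhds_zero_nat
    apply one_div_le_one_div_of_le (by positivity)
    have : j ≤ φ j := hφmono.le_apply
    exact_mod_cast add_le_add (Nat.cast_le.2 this) (le_refl (1:ℝ))
  -- points of Sn (n (φ j)) converging to z
  have hw : ∀ j : ℕ, ∃ w ∈ Sn (n (φ j)), dist w z < 1 / (φ j + 1) := fun j =>
    Metric.exists_dist_lt_of_hausdorffDist_lt' hzS (hHd (φ j)) (hfin (n (φ j)))
  choose w hwmem hwdist using hw
  have htw : Tendsto w atTop (nhds z) := by
    rw [tendsto_iff_dist_tendsto_zero]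
    exact squeeze_zero (fun j => dist_nonneg) (fun j => (hwdist j).le) hlim
  have hty : Tendsto (fun j => y (φ j)) atTop (nhds x) := by
    rw [tendsto_iff_dist_tendsto_zero]
    exact squeeze_zero (fun j => dist_nonneg) (fun j => (hydist (φ j)).le) hlim
  have htsub : Tendsto (fun j => w j - y (φ j)) atTop (nhds (z - x)) := htw.sub hty
  have hzxne : z - x ≠ 0 := sub_ne_zero.2 hzx
  have hnormpos : (0 : ℝ) < ‖z - x‖ := norm_pos_iff.2 hzxne
  have htnorm : Tendsto (fun j => ‖w j - y (φ j)‖) atTop (nhds ‖z - x‖) := htsub.norm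
  have htunit : Tendsto (fun j => ‖w j - y (φ j)‖⁻¹ • (w j - y (φ j))) atTop
      (nhds (‖z - x‖⁻¹ • (z - x))) := (htnorm.inv₀ hnormpos.ne').smul htsub
  have htinner : Tendsto
      (fun j => (inner ℝ (ξ (φ j)) (‖w j - y (φ j)‖⁻¹ • (w j - y (φ j))) : ℝ)) atTop
      (nhds (inner ℝ ξ₀ (‖z - x‖⁻¹ • (z - x)) : ℝ)) := hξtend.inner htunit
  have hball : ‖z - x‖ < h := by rwa [Metric.mem_ball, dist_eq_norm] at hzball
  have hev1 : ∀ᶠ j in atTop,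
      (inner ℝ (ξ (φ j)) (‖w j - y (φ j)‖⁻¹ • (w j - y (φ j))) : ℝ) > Real.cos (ρ / 2) :=
    htinner.eventually (eventually_gt_nhds hzcos)
  have hev2 : ∀ᶠ j in atTop, ‖w j - y (φ j)‖ < h :=
    htnorm.eventually (eventually_lt_nhds hball)
  have hev3 : ∀ᶠ j in atTop, (0 : ℝ) < ‖w j - y (φ j)‖ :=
    htnorm.eventually (eventually_gt_nhds hnormpos)
  obtain ⟨j, h1, h2, h3⟩ := (hev1.and (hev2.and hev3)).exists
  have hwne : w j ≠ y (φ j) := by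
    intro hcontra
    rw [hcontra] at h3
    simp at h3
  have hwfcone : w j ∈ fcone d ρ h (y (φ j)) (ξ (φ j)) := by
    refine ⟨⟨hwne, h1⟩, ?_⟩
    rw [Metric.mem_ball, dist_eq_norm]
    exact h2
  exact (hξsub (φ j)) hwfcone (hwmem j)
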